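/- d₈(T²) ≤ 5/(8√2): the flat torus admits a partition into 8 congruent hexagons each of diameter 5/(8√2) = √(25/128). -/

import Mathlib

open scoped Real Pointwise

/-- The Euclidean (flat) distance on the torus `T² = ℝ²/ℤ²`. -/
noncomputable def torusDist (u v : AddCircle (1:ℝ) × AddCircle (1:ℝ)) : ℝ :=
  Real.sqrt (‖u.1 - v.1‖ ^ 2 + ‖u.2 - v.2‖ ^ 2)

/-- The diameter of a subset of the flat torus. -/
noncomputable def torusDiam (F : Set (AddCircle (1:ℝ) × AddCircle (1:ℝ))) : ℝ :=
  sSup {d | ∃ u ∈ F, ∃ v ∈ F, d = torusDist u v}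

/-- `d_m(T²)`: infimum of the maximal diameter over coverings of `T²` by `m` sets. -/
noncomputable def dTor (m : ℕ) : ℝ :=
  sInf {τ | ∃ F : Fin m → Set (AddCircle (1:ℝ) × AddCircle (1:ℝ)),
    (⋃ i, F i) = Set.univ ∧ ∀ i, torusDiam (F i) ≤ τ}

/-- The vertical line (circle) `l_x = {x} × T¹` on the flat torus. -/
def vline (x : ℝ) : Set (AddCircle (1:ℝ) × AddCircle (1:ℝ)) :=
  {p | p.1 = (x : AddCircle (1:ℝ))}

namespace TorusD8

/-- Reduction of a real to `[-1/2, 1/2)` modulo `1`. -/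
noncomputable def fr (a : ℝ) : ℝ := Int.fract (a + 1/2) - 1/2

lemma fr_lb (a : ℝ) : -(1/2) ≤ fr a := by
  have := Int.fract_nonneg (a + 1/2); unfold fr; linarith

lemma fr_ub (a : ℝ) : fr a < 1/2 := by
  have := Int.fract_lt_one (a + 1/2); unfold fr; linarith

lemma fr_sub_int (a : ℝ) : ∃ k : ℤ, a - fr a = (k : ℝ) := by
  refine ⟨⌊a + 1/2⌋, ?_⟩
  have := Int.self_sub_fract (a + 1/2)
  unfold fr; linarith

lemma fr_add_int (a : ℝ) (k : ℤ) : fr (a + (k:ℝ)) = fr a := by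
  unfold fr
  rw [show a + (k:ℝ) + 1/2 = (a + 1/2) + (k:ℝ) by ring, Int.fract_add_intCast]

open scoped Classical in
/-- Corner-fixing map on the square `[-1/2,1/2)²` (in lattice coordinates),
sending it into the hexagon `|3u+5v| ≤ 5/2, |u-v| ≤ 1, |5u+3v| ≤ 5/2`. -/
noncomputable def fix (w : ℝ × ℝ) : ℝ × ℝ :=
  if 3*w.1+5*w.2 > 5/2 ∨ 5*w.1+3*w.2 > 5/2 then
    (if w.2 ≤ w.1 then (w.1-1, w.2) else (w.1, w.2-1))
  else if 3*w.1+5*w.2 < -(5/2) ∨ 5*w.1+3*w.2 < -(5/2) then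
    (if w.1 ≤ w.2 then (w.1+1, w.2) else (w.1, w.2+1))
  else w

lemma fix_sub_int (w : ℝ × ℝ) : ∃ m n : ℤ, fix w = (w.1 + (m:ℝ), w.2 + (n:ℝ)) := by
  unfold fix
  split_ifs <;>
  [ exact ⟨-1, 0, by rw [Prod.ext_iff]; push_cast; constructor <;> ring⟩;
    exact ⟨0, -1, by rw [Prod.ext_iff]; push_cast; constructor <;> ring⟩;
    exact ⟨1, 0, by rw [Prod.ext_iff]; push_cast; constructor <;> ring⟩;
    exact ⟨0, 1, by rw [Prod.ext_iff]; push_cast; constructor <;> ring⟩;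
    exact ⟨0, 0, by rw [Prod.ext_iff]; push_cast; constructor <;> ring⟩ ]

lemma fix_hex (w : ℝ × ℝ) (h1 : -(1/2) ≤ w.1) (h2 : w.1 ≤ 1/2)
    (h3 : -(1/2) ≤ w.2) (h4 : w.2 ≤ 1/2) :
    |3*(fix w).1 + 5*(fix w).2| ≤ 5/2 ∧ |(fix w).1 - (fix w).2| ≤ 1 ∧
      |5*(fix w).1 + 3*(fix w).2| ≤ 5/2 := by
  obtain ⟨u, v⟩ := w
  simp only at h1 h2 h3 h4
  unfold fix
  split_ifs with hP hO hN hO' <;>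
    simp only [abs_le] <;>
    [ (rcases hP with h | h); (rcases hP with h | h);
      (rcases hN with h | h); (rcases hN with h | h); skip ] <;>
    [ skip; skip; skip; skip; skip; skip; skip; skip;
      (push_neg at hP hN; obtain ⟨ha, hb⟩ := hP; obtain ⟨hc, hd⟩ := hN) ] <;>
    refine ⟨⟨by linarith, by linarith⟩, ⟨by linarith, by linarith⟩,
      ⟨by linarith, by linarith⟩⟩

/-- Reduction map in lattice coordinates. -/
noncomputable def ruv (w : ℝ × ℝ) : ℝ × ℝ := fix (fr w.1, fr w.2)

lemma ruv_sub_int (w : ℝ × ℝ) : ∃ m n : ℤ, w - ruv w = ((m:ℝ), (n:ℝ)) := by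
  obtain ⟨k1, hk1⟩ := fr_sub_int w.1
  obtain ⟨k2, hk2⟩ := fr_sub_int w.2
  obtain ⟨m, n, hmn⟩ := fix_sub_int (fr w.1, fr w.2)
  refine ⟨k1 - m, k2 - n, ?_⟩
  unfold ruv
  rw [hmn, Prod.ext_iff]
  push_cast
  constructor <;> dsimp only [Prod.fst_sub, Prod.snd_sub] <;> linarith

lemma ruv_add_int (w : ℝ × ℝ) (m n : ℤ) :
    ruv (w.1 + (m:ℝ), w.2 + (n:ℝ)) = ruv w := by
  unfold ruv
  rw [fr_add_int, fr_add_int]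

lemma ruv_hex (w : ℝ × ℝ) :
    |3*(ruv w).1 + 5*(ruv w).2| ≤ 5/2 ∧ |(ruv w).1 - (ruv w).2| ≤ 1 ∧
      |5*(ruv w).1 + 3*(ruv w).2| ≤ 5/2 := by
  unfold ruv
  exact fix_hex _ (fr_lb _) (le_of_lt (fr_ub _)) (fr_lb _) (le_of_lt (fr_ub _))

/-- Linear coordinates: from real coordinates to lattice coordinates. -/
noncomputable def toUV (x : ℝ × ℝ) : ℝ × ℝ := (3*x.1 - x.2, -x.1 + 3*x.2)

/-- Inverse linear map. -/
noncomputable def fromUV (w : ℝ × ℝ) : ℝ × ℝ := ((3*w.1 + w.2)/8, (w.1 + 3*w.2)/8)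

lemma from_toUV (x : ℝ × ℝ) : fromUV (toUV x) = x := by
  unfold fromUV toUV; ext <;> simp <;> ring

/-- The reduction map `ℝ² → ℝ²` whose range is (inside) the hexagon and which
reduces modulo the lattice `Λ`. -/
noncomputable def rho (x : ℝ × ℝ) : ℝ × ℝ := fromUV (ruv (toUV x))

/-- The lattice `Λ` generated by `q₁ = (3/8, 1/8)` and `q₂ = (1/8, 3/8)`. -/
def Lat (y : ℝ × ℝ) : Prop := ∃ m n : ℤ, y = ((3*(m:ℝ) + (n:ℝ))/8, ((m:ℝ) + 3*(n:ℝ))/8)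

lemma lat_int (p q : ℤ) : Lat ((p:ℝ), (q:ℝ)) := by
  refine ⟨3*p - q, -p + 3*q, ?_⟩
  rw [Prod.ext_iff]
  push_cast
  constructor <;> ring

lemma rho_sub_lat (x : ℝ × ℝ) : Lat (x - rho x) := by
  obtain ⟨m, n, hmn⟩ := ruv_sub_int (toUV x)
  refine ⟨m, n, ?_⟩
  have h1 : (toUV x).1 - (ruv (toUV x)).1 = (m:ℝ) := by
    rw [← Prod.fst_sub, hmn]
  have h2 : (toUV x).2 - (ruv (toUV x)).2 = (n:ℝ) := by
    rw [← Prod.snd_sub, hmn]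
  have e1 : x.1 = (3*(toUV x).1 + (toUV x).2)/8 := by unfold toUV; dsimp only; ring
  have e2 : x.2 = ((toUV x).1 + 3*(toUV x).2)/8 := by unfold toUV; dsimp only; ring
  have r1 : (rho x).1 = (3*(ruv (toUV x)).1 + (ruv (toUV x)).2)/8 := rfl
  have r2 : (rho x).2 = ((ruv (toUV x)).1 + 3*(ruv (toUV x)).2)/8 := rfl
  rw [Prod.ext_iff]
  constructor
  · dsimp only [Prod.fst_sub]; rw [e1, r1]; linarith
  · dsimp only [Prod.snd_sub]; rw [e2, r2]; linarith

lemma rho_shift (x y : ℝ × ℝ) (h : Lat (x - y)) : rho x = rho y := by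
  obtain ⟨m, n, hmn⟩ := h
  have h1 : x.1 - y.1 = (3*m + n)/8 := by rw [← Prod.fst_sub, hmn]
  have h2 : x.2 - y.2 = (m + 3*n)/8 := by rw [← Prod.snd_sub, hmn]
  unfold rho
  congr 1
  have : toUV x = ((toUV y).1 + ((m:ℤ):ℝ), (toUV y).2 + ((n:ℤ):ℝ)) := by
    unfold toUV
    rw [Prod.ext_iff]
    constructor <;> dsimp only <;> push_cast <;> linarith
  rw [this, ruv_add_int]

lemma rho_idem (x : ℝ × ℝ) : rho (rho x) = rho x := by
  apply rho_shift
  obtain ⟨m, n, hmn⟩ := rho_sub_lat x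
  refine ⟨-m, -n, ?_⟩
  have h : rho x - x = -(x - rho x) := by ring
  rw [h, hmn, Prod.ext_iff]
  push_cast
  constructor <;> dsimp only [Prod.fst_neg, Prod.snd_neg] <;> ring

lemma rho_hex (x : ℝ × ℝ) :
    |(rho x).1 + 3*(rho x).2| ≤ 5/8 ∧ |(rho x).1 - (rho x).2| ≤ 1/4 ∧
      |3*(rho x).1 + (rho x).2| ≤ 5/8 := by
  obtain ⟨hA, hB, hC⟩ := ruv_hex (toUV x)
  simp only [abs_le] at *
  have r1 : (rho x).1 = (3*(ruv (toUV x)).1 + (ruv (toUV x)).2)/8 := rfl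
  have r2 : (rho x).2 = ((ruv (toUV x)).1 + 3*(ruv (toUV x)).2)/8 := rfl
  rw [r1, r2]
  refine ⟨⟨by linarith [hA.1], by linarith [hA.2]⟩,
    ⟨by linarith [hB.1], by linarith [hB.2]⟩,
    ⟨by linarith [hC.1], by linarith [hC.2]⟩⟩



/-- Shorthand for the torus. -/
abbrev T2 := AddCircle (1:ℝ) × AddCircle (1:ℝ)

/-- The quotient embedding `ℝ² → T²`. -/
noncomputable def emb (x : ℝ × ℝ) : T2 :=
  ((x.1 : AddCircle (1:ℝ)), (x.2 : AddCircle (1:ℝ)))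

lemma emb_add (x y : ℝ × ℝ) : emb (x + y) = emb x + emb y := by
  unfold emb
  rw [Prod.ext_iff]
  constructor <;> dsimp only [Prod.fst_add, Prod.snd_add] <;>
    exact AddCircle.coe_add (p := (1:ℝ)) _ _

lemma emb_int (p q : ℤ) : emb ((p:ℝ), (q:ℝ)) = 0 := by
  unfold emb
  rw [Prod.ext_iff]
  constructor <;> dsimp only [Prod.fst_zero, Prod.snd_zero] <;>
    rw [AddCircle.coe_eq_zero_iff] <;> [exact ⟨p, by simp⟩; exact ⟨q, by simp⟩]

lemma emb_eq_sub {x y : ℝ × ℝ} (h : emb x = emb y) :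
    ∃ p q : ℤ, x - y = ((p:ℝ), (q:ℝ)) := by
  have e1 : ((x.1:ℝ) : AddCircle (1:ℝ)) = ((y.1:ℝ) : AddCircle (1:ℝ)) := congrArg Prod.fst h
  have e2 : ((x.2:ℝ) : AddCircle (1:ℝ)) = ((y.2:ℝ) : AddCircle (1:ℝ)) := congrArg Prod.snd h
  have h1 : ((x.1 - y.1 : ℝ) : AddCircle (1:ℝ)) = 0 := by
    rw [AddCircle.coe_sub, e1, sub_self]
  have h2 : ((x.2 - y.2 : ℝ) : AddCircle (1:ℝ)) = 0 := by
    rw [AddCircle.coe_sub, e2, sub_self]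
  rw [AddCircle.coe_eq_zero_iff] at h1 h2
  obtain ⟨p, hp⟩ := h1
  obtain ⟨q, hq⟩ := h2
  refine ⟨p, q, ?_⟩
  rw [Prod.ext_iff]
  constructor <;> dsimp only [Prod.fst_sub, Prod.snd_sub] <;>
    [rw [← hp]; rw [← hq]] <;> simp

lemma emb_surj (z : T2) : ∃ x : ℝ × ℝ, emb x = z := by
  obtain ⟨x1, hx1⟩ := Quot.exists_rep z.1
  obtain ⟨x2, hx2⟩ := Quot.exists_rep z.2
  exact ⟨(x1, x2), Prod.ext hx1 hx2⟩

/-- Translation vectors in `ℝ²`. -/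
noncomputable def tvec (i : Fin 8) : ℝ × ℝ := (((i:ℕ):ℝ) * (3/8), ((i:ℕ):ℝ) * (1/8))

lemma lat_tvec (i : Fin 8) : Lat (tvec i) := by
  refine ⟨(i:ℕ), 0, ?_⟩
  unfold tvec
  rw [Prod.ext_iff]
  push_cast
  constructor <;> ring

/-- The eight translations on the torus. -/
noncomputable def tt (i : Fin 8) : T2 := emb (tvec i)

/-- The fundamental hexagonal piece on the torus. -/
noncomputable def Hset : Set T2 := emb '' Set.range rho

lemma cover : (⋃ i, (tt i + ·) '' Hset) = Set.univ := by
  ext z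
  simp only [Set.mem_iUnion, Set.mem_univ, iff_true, Set.mem_image]
  obtain ⟨x, rfl⟩ := emb_surj z
  obtain ⟨m, n, hmn⟩ := rho_sub_lat x
  set k : ℤ := (m + 3*n) % 8 with hk
  have hk0 : 0 ≤ k := Int.emod_nonneg _ (by norm_num)
  have hk8 : k < 8 := Int.emod_lt_of_pos _ (by norm_num)
  set s : ℤ := (m + 3*n) / 8 with hse
  have hs : 8 * s + k = m + 3*n := Int.mul_ediv_add_emod _ _
  refine ⟨⟨k.toNat, by omega⟩, emb (rho x), ⟨rho x, Set.mem_range_self x, rfl⟩, ?_⟩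
  have h1 : x.1 - (rho x).1 = (3*(m:ℝ) + (n:ℝ))/8 := by
    rw [← Prod.fst_sub, hmn]
  have h2 : x.2 - (rho x).2 = ((m:ℝ) + 3*(n:ℝ))/8 := by
    rw [← Prod.snd_sub, hmn]
  have hkr : ((m:ℝ) + 3*(n:ℝ)) = 8*(s:ℝ) + (k:ℝ) := by exact_mod_cast hs.symm
  have key : emb (x - rho x - tvec ⟨k.toNat, by omega⟩) = 0 := by
    have : x - rho x - tvec ⟨k.toNat, by omega⟩ = (((3*s - n : ℤ):ℝ), ((s:ℤ):ℝ)) := by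
      unfold tvec
      rw [Prod.ext_iff]
      constructor <;>
        dsimp only [Prod.fst_sub, Prod.snd_sub, Fin.val_mk] <;>
        rw [show ((k.toNat : ℕ):ℝ) = (k:ℝ) by
          exact_mod_cast Int.toNat_of_nonneg hk0] <;>
        push_cast <;> linarith
    rw [this]
    exact emb_int _ _
  have e : x = tvec ⟨k.toNat, by omega⟩ + rho x + (x - rho x - tvec ⟨k.toNat, by omega⟩) := by
    ring
  calc tt ⟨k.toNat, by omega⟩ + emb (rho x)
      = emb (tvec ⟨k.toNat, by omega⟩ + rho x) := (emb_add _ _).symm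
    _ = emb (tvec ⟨k.toNat, by omega⟩ + rho x) + emb (x - rho x - tvec ⟨k.toNat, by omega⟩) := by
        rw [key, add_zero]
    _ = emb x := by rw [← emb_add, ← e]

lemma piece_inj {i j : Fin 8} {a b : ℝ × ℝ}
    (h : tt i + emb (rho a) = tt j + emb (rho b)) : i = j := by
  have h' : emb (tvec i + rho a) = emb (tvec j + rho b) := by
    rw [emb_add, emb_add]; exact h
  obtain ⟨p, q, hpq⟩ := emb_eq_sub h'
  have hra : rho (tvec i + rho a) = rho a := by
    rw [rho_shift (tvec i + rho a) (rho a) (by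
      rw [show tvec i + rho a - rho a = tvec i by ring]; exact lat_tvec i)]
    exact rho_idem a
  have hrb : rho (tvec j + rho b) = rho b := by
    rw [rho_shift (tvec j + rho b) (rho b) (by
      rw [show tvec j + rho b - rho b = tvec j by ring]; exact lat_tvec j)]
    exact rho_idem b
  have hab : rho a = rho b := by
    rw [← hra, ← hrb]
    exact rho_shift _ _ (by rw [hpq]; exact lat_int p q)
  have h2 : (tvec i).2 - (tvec j).2 = (q:ℝ) := by
    have := (Prod.ext_iff.1 hpq).2
    dsimp only [Prod.snd_sub, Prod.snd_add] at this ⊢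
    rw [hab] at this
    linarith
  unfold tvec at h2
  dsimp only at h2
  have h3 : ((i:ℕ):ℝ) - ((j:ℕ):ℝ) = 8*(q:ℝ) := by linarith
  have h4 : ((i:ℕ):ℤ) - ((j:ℕ):ℤ) = 8*q := by exact_mod_cast h3
  have hi := i.isLt
  have hj := j.isLt
  exact Fin.ext (by omega)

lemma hex_bound {a b : ℝ × ℝ} :
    ((rho a).1 - (rho b).1)^2 + ((rho a).2 - (rho b).2)^2 ≤ 25/128 := by
  obtain ⟨hA, hB, hC⟩ := rho_hex a
  obtain ⟨hA', hB', hC'⟩ := rho_hex b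
  rw [abs_le] at hA hB hC hA' hB' hC'
  set u := (rho a).1 - (rho b).1 with hu
  set v := (rho a).2 - (rho b).2 with hv
  have g0 : (0:ℝ) ≤ 5/4 - (u + 3*v) := by rw [hu, hv]; linarith [hA.2, hA'.1]
  have g1 : (0:ℝ) ≤ 5/4 + (u + 3*v) := by rw [hu, hv]; linarith [hA.1, hA'.2]
  have g2 : (0:ℝ) ≤ 1/2 - (u - v) := by rw [hu, hv]; linarith [hB.2, hB'.1]
  have g3 : (0:ℝ) ≤ 1/2 + (u - v) := by rw [hu, hv]; linarith [hB.1, hB'.2]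
  have g4 : (0:ℝ) ≤ 5/4 - (3*u + v) := by rw [hu, hv]; linarith [hC.2, hC'.1]
  have g5 : (0:ℝ) ≤ 5/4 + (3*u + v) := by rw [hu, hv]; linarith [hC.1, hC'.2]
  nlinarith [mul_nonneg g0 (mul_nonneg g2 g5), mul_nonneg g1 (mul_nonneg g3 g4)]

lemma rho_coord (x : ℝ × ℝ) : |(rho x).1| ≤ 7/32 ∧ |(rho x).2| ≤ 7/32 := by
  obtain ⟨hA, hB, hC⟩ := rho_hex x
  simp only [abs_le] at *
  exact ⟨⟨by linarith [hC.1, hB.1], by linarith [hC.2, hB.2]⟩,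
    ⟨by linarith [hA.1, hB.2], by linarith [hA.2, hB.1]⟩⟩

lemma sqrt_const : Real.sqrt (25/128) = 5 / (8 * Real.sqrt 2) := by
  rw [show (25/128 : ℝ) = (5 / (8 * Real.sqrt 2))^2 by
    rw [div_pow, mul_pow, Real.sq_sqrt (by norm_num : (0:ℝ) ≤ 2)]; norm_num]
  exact Real.sqrt_sq (by positivity)

lemma diam_piece (i : Fin 8) :
    torusDiam ((tt i + ·) '' Hset) ≤ 5 / (8 * Real.sqrt 2) := by
  apply Real.sSup_le _ (by positivity)
  rintro d ⟨u, hu, v, hv, rfl⟩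
  obtain ⟨_, ⟨_, ⟨a, rfl⟩, rfl⟩, rfl⟩ := hu
  obtain ⟨_, ⟨_, ⟨b, rfl⟩, rfl⟩, rfl⟩ := hv
  set s1 := (rho a).1 - (rho b).1 with hs1
  set s2 := (rho a).2 - (rho b).2 with hs2
  have e1 : (tt i + emb (rho a)).1 - (tt i + emb (rho b)).1 = ((s1 : ℝ) : AddCircle (1:ℝ)) := by
    dsimp only [Prod.fst_add]
    rw [hs1, AddCircle.coe_sub]
    unfold emb
    dsimp only
    abel
  have e2 : (tt i + emb (rho a)).2 - (tt i + emb (rho b)).2 = ((s2 : ℝ) : AddCircle (1:ℝ)) := by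
    dsimp only [Prod.snd_add]
    rw [hs2, AddCircle.coe_sub]
    unfold emb
    dsimp only
    abel
  have ca := rho_coord a
  have cb := rho_coord b
  simp only [abs_le] at ca cb
  have hn1 : ‖((s1 : ℝ) : AddCircle (1:ℝ))‖ = |s1| := by
    rw [AddCircle.norm_coe_eq_abs_iff (p := (1:ℝ)) (by norm_num)]
    rw [abs_le, abs_one]
    constructor <;> rw [hs1] <;> [linarith [ca.1.1, cb.1.2]; linarith [ca.1.2, cb.1.1]]
  have hn2 : ‖((s2 : ℝ) : AddCircle (1:ℝ))‖ = |s2| := by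
    rw [AddCircle.norm_coe_eq_abs_iff (p := (1:ℝ)) (by norm_num)]
    rw [abs_le, abs_one]
    constructor <;> rw [hs2] <;> [linarith [ca.2.1, cb.2.2]; linarith [ca.2.2, cb.2.1]]
  unfold torusDist
  rw [e1, e2, hn1, hn2, sq_abs, sq_abs, ← sqrt_const]
  exact Real.sqrt_le_sqrt hex_bound

lemma pieces_disjoint (i j : Fin 8) (hij : i ≠ j) :
    Disjoint ((tt i + ·) '' Hset) ((tt j + ·) '' Hset) := by
  rw [Set.disjoint_left]
  rintro z ⟨_, ⟨_, ⟨a, rfl⟩, rfl⟩, rfl⟩ ⟨_, ⟨_, ⟨b, rfl⟩, rfl⟩, h⟩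
  exact hij (piece_inj h.symm)

end TorusD8

theorem torus_d8_upper :
    (∃ (H : Set (AddCircle (1:ℝ) × AddCircle (1:ℝ)))
        (t : Fin 8 → AddCircle (1:ℝ) × AddCircle (1:ℝ)),
        (⋃ i, (t i + ·) '' H) = Set.univ ∧
        (∀ i j, i ≠ j → Disjoint ((t i + ·) '' H) ((t j + ·) '' H)) ∧
        ∀ i, torusDiam ((t i + ·) '' H) ≤ 5 / (8 * Real.sqrt 2)) ∧
      dTor 8 ≤ 5 / (8 * Real.sqrt 2) := by
  constructor
  · exact ⟨TorusD8.Hset, TorusD8.tt, TorusD8.cover, TorusD8.pieces_disjoint,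
      TorusD8.diam_piece⟩
  · apply csInf_le
    · refine ⟨0, fun τ hτ => ?_⟩
      obtain ⟨F, hcov, hble⟩ := hτ
      have h0 : (0 : AddCircle (1:ℝ) × AddCircle (1:ℝ)) ∈ ⋃ i, F i := by
        rw [hcov]; trivial
      obtain ⟨i, hi⟩ := Set.mem_iUnion.1 h0
      refine le_trans ?_ (hble i)
      unfold torusDiam
      apply le_csSup
      · refine ⟨2, ?_⟩
        rintro d ⟨u, _, v, _, rfl⟩
        unfold torusDist
        have b1 := AddCircle.norm_le_half_period (p := (1:ℝ)) (x := u.1 - v.1) (by norm_num)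
        have b2 := AddCircle.norm_le_half_period (p := (1:ℝ)) (x := u.2 - v.2) (by norm_num)
        rw [abs_one] at b1 b2
        have n1 := norm_nonneg (u.1 - v.1)
        have n2 := norm_nonneg (u.2 - v.2)
        have : ‖u.1 - v.1‖^2 + ‖u.2 - v.2‖^2 ≤ 4 := by nlinarith
        calc Real.sqrt (‖u.1 - v.1‖^2 + ‖u.2 - v.2‖^2) ≤ Real.sqrt 4 :=
              Real.sqrt_le_sqrt this
          _ = 2 := by
              rw [show (4:ℝ) = 2^2 by norm_num, Real.sqrt_sq (by norm_num : (0:ℝ) ≤ 2)]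
      · exact ⟨0, hi, 0, hi, by simp [torusDist]⟩
    · exact ⟨fun i => (TorusD8.tt i + ·) '' TorusD8.Hset, TorusD8.cover,
        TorusD8.diam_piece⟩
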